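/- Let $b>0$, $\alpha\in(0,1)$, $\delta>0$ with $4\delta < \alpha(1-\alpha)b^2$, and let $v(\eta) = (1-\eta)^\alpha$. Suppose $w \ge b(1-\eta)$ and $w\,\partial_\eta^2 w \le 2\delta$ pointwise on a domain. Then the linearized operator $L v := (2w\partial_\eta^2 w)v - \partial_\tau v - \eta\partial_\xi v + w^2 \partial_\eta^2 v$ satisfies $Lv \le -b^2\alpha(1-\alpha)(1-\eta)^\alpha + 4\delta(1-\eta)^\alpha < 0$ at every point with $\eta\in(0,1)$. -/

import Mathlib

open Real Set

lemma d1' (α : ℝ) {x : ℝ} (hx : x < 1) :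
    HasDerivAt (fun e : ℝ => (1 - e) ^ α) (-(α * (1 - x) ^ (α - 1))) x := by
  have hne : (1 - x) ≠ 0 := by linarith
  have h := (Real.hasDerivAt_rpow_const (p := α) (x := 1 - x) (Or.inl hne)).comp x
    ((hasDerivAt_const x (1:ℝ)).sub (hasDerivAt_id x))
  simpa [mul_comm, Function.comp_def] using h

lemma d2' (α : ℝ) {x : ℝ} (hx : x < 1) :
    deriv (deriv (fun e : ℝ => (1 - e) ^ α)) x = α * (α - 1) * (1 - x) ^ (α - 2) := by
  have hev : deriv (fun e : ℝ => (1 - e) ^ α) =ᶠ[nhds x]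
      fun e => -(α * (1 - e) ^ (α - 1)) := by
    filter_upwards [Iio_mem_nhds hx] with e he using (d1' α he).deriv
  rw [hev.deriv_eq]
  have h := ((d1' (α - 1) hx).const_mul α).neg
  have : α - 1 - 1 = α - 2 := by ring
  simpa [this, mul_assoc] using h.deriv

theorem stmt_5
    (b α δ : ℝ) (hb : 0 < b) (hα : α ∈ Set.Ioo (0:ℝ) 1) (hδ : 0 < δ)
    (hδα : 4 * δ < α * (1 - α) * b ^ 2)
    (w : ℝ → ℝ → ℝ → ℝ)
    (V : ℝ → ℝ → ℝ → ℝ)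
    (hV : V = fun _ _ η => (1 - η) ^ α)
    (hwlb : ∀ τ ξ η, η ∈ Set.Ioo (0:ℝ) 1 → b * (1 - η) ≤ w τ ξ η)
    (hwηη : ∀ τ ξ η, η ∈ Set.Ioo (0:ℝ) 1 →
      w τ ξ η * deriv (deriv (fun e => w τ ξ e)) η ≤ 2 * δ) :
    ∀ τ ξ η, η ∈ Set.Ioo (0:ℝ) 1 →
      (2 * w τ ξ η * deriv (deriv (fun e => w τ ξ e)) η) * V τ ξ η
        - deriv (fun t => V t ξ η) τ - η * deriv (fun x => V τ x η) ξ
        + (w τ ξ η) ^ 2 * deriv (deriv (fun e => V τ ξ e)) η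
      ≤ -(b ^ 2 * α * (1 - α) * (1 - η) ^ α) + 4 * δ * (1 - η) ^ α ∧
      -(b ^ 2 * α * (1 - α) * (1 - η) ^ α) + 4 * δ * (1 - η) ^ α < 0 := by
  obtain ⟨hα0, hα1⟩ := hα
  intro τ ξ η hη
  obtain ⟨hη0, hη1⟩ := hη
  subst hV
  have h1η : (0:ℝ) < 1 - η := by linarith
  have hP : 0 < (1 - η) ^ α := Real.rpow_pos_of_pos h1η α
  have hP2 : 0 < (1 - η) ^ (α - 2) := Real.rpow_pos_of_pos h1η _
  have hkey : (1 - η) ^ (α - 2) * (1 - η) ^ (2:ℕ) = (1 - η) ^ α := by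
    rw [← Real.rpow_natCast (1 - η) 2, ← Real.rpow_add h1η]
    norm_num
  constructor
  · simp only [deriv_const]
    rw [d2' α hη1]
    set ww := w τ ξ η with hww
    have hwlb' := hwlb τ ξ η ⟨hη0, hη1⟩
    have hwηη' := hwηη τ ξ η ⟨hη0, hη1⟩
    have hwpos : 0 < ww := lt_of_lt_of_le (by positivity) hwlb'
    have hsq : (b * (1 - η)) ^ 2 ≤ ww ^ 2 := by
      apply pow_le_pow_left₀ (by positivity) hwlb'
    have hneg : α * (α - 1) * (1 - η) ^ (α - 2) ≤ 0 := by
      apply mul_nonpos_of_nonpos_of_nonneg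
      · nlinarith
      · positivity
    have h2 : ww ^ 2 * (α * (α - 1) * (1 - η) ^ (α - 2))
        ≤ (b * (1 - η)) ^ 2 * (α * (α - 1) * (1 - η) ^ (α - 2)) := by
      apply mul_le_mul_of_nonpos_right hsq hneg
    have heq : (b * (1 - η)) ^ 2 * (α * (α - 1) * (1 - η) ^ (α - 2))
        = -(b ^ 2 * α * (1 - α) * (1 - η) ^ α) := by
      rw [← hkey]; push_cast; ring
    have h3 : 2 * ww * deriv (deriv (fun e => w τ ξ e)) η * (1 - η) ^ α
        ≤ 4 * δ * (1 - η) ^ α := by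
      have := mul_le_mul_of_nonneg_right hwηη' hP.le
      nlinarith
    rw [heq] at h2
    linarith
  · have : 4 * δ - α * (1 - α) * b ^ 2 < 0 := by linarith
    nlinarith
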